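/- Composing the unigram and bigram components: with c^{(1)}_t = f^{(1)}_t·c^{(1)}_{t-1} + u^{(1)}_t, c^{(2)}_t = f^{(2)}_t·c^{(2)}_{t-1} + (c^{(1)}_{t-1} + r)·u^{(2)}_t (both starting at 0), and c_t = p^{(1)}·c^{(1)}_t + p^{(2)}·c^{(2)}_t where f^{(j)}_t, u^{(j)}_t depend only on x_t and r, p^{(1)}, p^{(2)} are constants, the function t ↦ c_t equals F⟦x_{:t}⟧ for the four-state WFSA F with μ_j(x_t) = u^{(j)}_t, φ_j(x_t) = f^{(j)}_t, γ = r, ρ_1 = p^{(1)}, ρ_2 = p^{(2)}. -/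

import Mathlib

/-- Non-ε transition weights of the four-state WFSA `F` of Section 5.1
(states `0 = q0`, `1 = q1`, `2 = q2`, `3 = q3`): self-loop on `q0` with
weight `1`, `q0 → q1` weight `μ1 a`, `q1 → q1` weight `φ1 a`, `q1 → q2` and
`q3 → q2` weight `μ2 a`, `q2 → q2` weight `φ2 a`. -/
def fTau {A : Type*} (μ1 φ1 μ2 φ2 : A → ℝ) : Fin 4 → Fin 4 → A → ℝ := fun q q' a =>
  if q = 0 ∧ q' = 0 then 1
  else if q = 0 ∧ q' = 1 then μ1 a
  else if q = 1 ∧ q' = 1 then φ1 a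
  else if q = 1 ∧ q' = 2 then μ2 a
  else if q = 3 ∧ q' = 2 then μ2 a
  else if q = 2 ∧ q' = 2 then φ2 a
  else 0

/-- The single ε-transition of `F`: `q0 → q3` with weight `γ`. -/
def fEps (γ : ℝ) : Fin 4 → Fin 4 → ℝ := fun q q' =>
  if q = 0 ∧ q' = 3 then γ else 0

/-- Final weights of `F`: `ρ1` on `q1` and `ρ2` on `q2`. -/
def fRho (ρ1 ρ2 : ℝ) : Fin 4 → ℝ := fun q =>
  if q = 1 then ρ1 else if q = 2 then ρ2 else 0

/-- Score assigned by `F` to the prefix `x_1 … x_t`: sum over all accepting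
paths (taking the ε-transition either not at all, or exactly once at some
position `k` among the steps) of the product of the initial weight (`1` on
`q0`), all transition weights, and the final weight. -/
noncomputable def fScore {A : Type*} (μ1 φ1 μ2 φ2 : A → ℝ) (γ ρ1 ρ2 : ℝ)
    (x : ℕ → A) (t : ℕ) : ℝ :=
  (∑ p : Fin (t + 1) → Fin 4,
      (if p 0 = 0 then (1 : ℝ) else 0) *
        (∏ i : Fin t, fTau μ1 φ1 μ2 φ2 (p i.castSucc) (p i.succ) (x (i.1 + 1))) *
        fRho ρ1 ρ2 (p (Fin.last t)))
  + ∑ k : Fin (t + 1), ∑ p : Fin (t + 2) → Fin 4,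
      (if p 0 = 0 then (1 : ℝ) else 0) *
        (∏ i : Fin (t + 1),
          if i.1 = k.1 then fEps γ (p i.castSucc) (p i.succ)
          else if i.1 < k.1 then fTau μ1 φ1 μ2 φ2 (p i.castSucc) (p i.succ) (x (i.1 + 1))
          else fTau μ1 φ1 μ2 φ2 (p i.castSucc) (p i.succ) (x i.1)) *
        fRho ρ1 ρ2 (p (Fin.last (t + 1)))

noncomputable def pathW (M : ℕ → Fin 4 → Fin 4 → ℝ) (t : ℕ) (q : Fin 4) : ℝ :=
  ∑ p : Fin (t + 1) → Fin 4,
    (if p 0 = 0 then (1 : ℝ) else 0) *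
      (∏ i : Fin t, M i.1 (p i.castSucc) (p i.succ)) *
      (if p (Fin.last t) = q then 1 else 0)

theorem pathW_zero (M : ℕ → Fin 4 → Fin 4 → ℝ) (q : Fin 4) :
    pathW M 0 q = if q = 0 then 1 else 0 := by
  unfold pathW
  rw [← (Equiv.funUnique (Fin 1) (Fin 4)).symm.sum_comp]
  simp only [Equiv.funUnique, Equiv.coe_fn_symm_mk, Finset.univ_unique, Finset.prod_empty]
  simp [Fin.last, Fin.sum_univ_four]

theorem pathW_succ (M : ℕ → Fin 4 → Fin 4 → ℝ) (t : ℕ) (q : Fin 4) :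
    pathW M (t + 1) q = ∑ q' : Fin 4, pathW M t q' * M t q' q := by
  unfold pathW
  rw [← (Fin.snocEquiv (fun _ : Fin (t + 2) => Fin 4)).sum_comp, Fintype.sum_prod_type]
  have key : ∀ (p' : Fin (t + 1) → Fin 4) (q'' : Fin 4),
      (if (Fin.snocEquiv (fun _ : Fin (t+2) => Fin 4)) (q'', p') 0 = 0 then (1:ℝ) else 0) *
        (∏ i : Fin (t+1), M i.1 (((Fin.snocEquiv (fun _ : Fin (t+2) => Fin 4)) (q'', p')) i.castSucc)
          (((Fin.snocEquiv (fun _ : Fin (t+2) => Fin 4)) (q'', p')) i.succ)) *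
        (if ((Fin.snocEquiv (fun _ : Fin (t+2) => Fin 4)) (q'', p')) (Fin.last (t+1)) = q then 1 else 0)
      = ((if p' 0 = 0 then (1:ℝ) else 0) *
        (∏ j : Fin t, M j.1 (p' j.castSucc) (p' j.succ)) * M t (p' (Fin.last t)) q'') *
        (if q'' = q then 1 else 0) := by
    intro p' q''
    simp only [Fin.snocEquiv, Equiv.coe_fn_mk]
    rw [Fin.prod_univ_castSucc]
    have hz : Fin.snoc (α := fun _ => Fin 4) p' q'' (0 : Fin (t+2)) = p' 0 := by
      rw [show (0 : Fin (t+2)) = (0 : Fin (t+1)).castSucc from rfl, Fin.snoc_castSucc]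
    simp only [hz, Fin.snoc_castSucc, Fin.succ_castSucc, Fin.succ_last, Fin.snoc_last,
      Fin.coe_castSucc, Fin.val_last]
    ring
  simp only [key]
  conv_lhs => rw [Finset.sum_comm]
  conv_rhs => simp only [pathW, Finset.sum_mul]
  conv_rhs => rw [Finset.sum_comm]
  apply Finset.sum_congr rfl
  intro p' _
  simp [mul_ite, ite_mul, mul_zero, mul_one, zero_mul,
    Finset.sum_ite_eq, Finset.sum_ite_eq']

theorem pathW_congr (M M' : ℕ → Fin 4 → Fin 4 → ℝ) (t : ℕ)
    (h : ∀ i, i < t → M i = M' i) (q : Fin 4) : pathW M t q = pathW M' t q := by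
  unfold pathW
  apply Finset.sum_congr rfl
  intro p _
  congr 2
  exact Finset.prod_congr rfl fun i _ => by rw [h i.1 i.isLt]

section Aux

variable {A : Type*} (U1 U2 F1 F2 : A → ℝ) (r : ℝ) (x : ℕ → A)

noncomputable def vM : ℕ → Fin 4 → Fin 4 → ℝ :=
  fun i q q' => fTau U1 F1 U2 F2 q q' (x (i + 1))

noncomputable def wM (k : ℕ) : ℕ → Fin 4 → Fin 4 → ℝ := fun i q q' =>
  if i = k then fEps r q q'
  else if i < k then fTau U1 F1 U2 F2 q q' (x (i + 1))
  else fTau U1 F1 U2 F2 q q' (x i)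

noncomputable def vV (t : ℕ) : Fin 4 → ℝ := pathW (vM U1 U2 F1 F2 x) t

noncomputable def wV (t : ℕ) (q : Fin 4) : ℝ :=
  ∑ k : Fin (t + 1), pathW (wM U1 U2 F1 F2 r x k.1) (t + 1) q

theorem vV_zero (q : Fin 4) : vV U1 U2 F1 F2 x 0 q = if q = 0 then 1 else 0 :=
  pathW_zero _ q

theorem vV_succ (t : ℕ) (q : Fin 4) :
    vV U1 U2 F1 F2 x (t + 1) q
      = ∑ q' : Fin 4, vV U1 U2 F1 F2 x t q' * fTau U1 F1 U2 F2 q' q (x (t + 1)) :=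
  pathW_succ _ t q

theorem wV_zero (q : Fin 4) : wV U1 U2 F1 F2 r x 0 q = fEps r 0 q := by
  unfold wV
  rw [Fin.sum_univ_one, pathW_succ]
  have hM : wM U1 U2 F1 F2 r x (0 : Fin 1).1 0 = fEps r := by
    funext q q'; simp [wM]
  simp only [pathW_zero, hM]
  simp [ite_mul, one_mul, zero_mul, Finset.sum_ite_eq]

theorem wV_succ (t : ℕ) (q : Fin 4) :
    wV U1 U2 F1 F2 r x (t + 1) q
      = (∑ q' : Fin 4, wV U1 U2 F1 F2 r x t q' * fTau U1 F1 U2 F2 q' q (x (t + 1)))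
        + ∑ q' : Fin 4, vV U1 U2 F1 F2 x (t + 1) q' * fEps r q' q := by
  unfold wV
  rw [Fin.sum_univ_castSucc]
  congr 1
  · -- k ≤ t part
    have step : ∀ k : Fin (t + 1),
        pathW (wM U1 U2 F1 F2 r x k.castSucc.1) (t + 2) q
          = ∑ q' : Fin 4, pathW (wM U1 U2 F1 F2 r x k.1) (t + 1) q'
              * fTau U1 F1 U2 F2 q' q (x (t + 1)) := by
      intro k
      have hc : (k.castSucc : Fin (t+2)).1 = k.1 := rfl
      rw [hc, pathW_succ]
      apply Finset.sum_congr rfl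
      intro q' _
      congr 1
      have h1 : t + 1 ≠ k.1 := by have := k.isLt; omega
      have h2 : ¬ (t + 1 < k.1) := by have := k.isLt; omega
      simp [wM, h1, h2]
    simp only [step]
    rw [Finset.sum_comm]
    apply Finset.sum_congr rfl
    intro q' _
    rw [Finset.sum_mul]
  · -- k = t + 1 part
    have hlast : (Fin.last (t + 1)).1 = t + 1 := rfl
    rw [hlast, pathW_succ]
    apply Finset.sum_congr rfl
    intro q' _
    congr 1
    · apply pathW_congr
      intro i hi
      have h1 : i ≠ t + 1 := by omega
      have h2 : i < t + 1 := hi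
      funext a b
      simp [wM, vM, h1, h2]
    · simp [wM]

end Aux

theorem fScore_eq {A : Type*} (U1 U2 F1 F2 : A → ℝ) (r p1 p2 : ℝ) (x : ℕ → A) (t : ℕ) :
    fScore U1 F1 U2 F2 r p1 p2 x t
      = (∑ q : Fin 4, vV U1 U2 F1 F2 x t q * fRho p1 p2 q)
        + ∑ q : Fin 4, wV U1 U2 F1 F2 r x t q * fRho p1 p2 q := by
  unfold fScore vV wV pathW vM wM
  congr 1
  · simp only [Finset.sum_mul]
    rw [Finset.sum_comm]
    refine Finset.sum_congr rfl fun p _ => ?_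
    simp (config := { decide := true }) [mul_ite, ite_mul, mul_one, mul_zero, zero_mul,
      Finset.sum_ite_eq]
  · simp only [Finset.sum_mul]
    conv_rhs => rw [Finset.sum_comm]
    refine Finset.sum_congr rfl fun k _ => ?_
    conv_rhs => rw [Finset.sum_comm]
    refine Finset.sum_congr rfl fun p _ => ?_
    simp (config := { decide := true }) [mul_ite, ite_mul, mul_one, mul_zero, zero_mul,
      Finset.sum_ite_eq]

/-- Composing the unigram and bigram components: with
`c¹_t = f¹_t·c¹_{t-1} + u¹_t`, `c²_t = f²_t·c²_{t-1} + (c¹_{t-1} + r)·u²_t`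
(both starting at `0`), and `c_t = p¹·c¹_t + p²·c²_t`, where
`fʲ_t = Fⱼ(x_t)` and `uʲ_t = Uⱼ(x_t)` depend only on `x_t` and `r, p¹, p²`
are constants, the function `t ↦ c_t` equals `F⟦x_{:t}⟧` for the four-state
WFSA `F` with `μ_j = Uⱼ`, `φ_j = Fⱼ`, `γ = r`, `ρ1 = p¹`, `ρ2 = p²`. -/
theorem stmt19 {A : Type*} [Fintype A] (U1 U2 F1 F2 : A → ℝ) (r p1 p2 : ℝ)
    (x : ℕ → A) (c1 c2 c : ℕ → ℝ)
    (h10 : c1 0 = 0) (h20 : c2 0 = 0)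
    (h1 : ∀ t, 1 ≤ t → c1 t = F1 (x t) * c1 (t - 1) + U1 (x t))
    (h2 : ∀ t, 1 ≤ t → c2 t = F2 (x t) * c2 (t - 1) + (c1 (t - 1) + r) * U2 (x t))
    (hc : ∀ t, c t = p1 * c1 t + p2 * c2 t) :
    ∀ t, c t = fScore U1 F1 U2 F2 r p1 p2 x t := by
  have key : ∀ t, vV U1 U2 F1 F2 x t 0 = 1 ∧ vV U1 U2 F1 F2 x t 3 = 0 ∧
      wV U1 U2 F1 F2 r x t 0 = 0 ∧ wV U1 U2 F1 F2 r x t 1 = 0 ∧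
      wV U1 U2 F1 F2 r x t 3 = r ∧ vV U1 U2 F1 F2 x t 1 = c1 t ∧
      vV U1 U2 F1 F2 x t 2 + wV U1 U2 F1 F2 r x t 2 = c2 t := by
    intro t
    induction t with
    | zero =>
      simp (config := { decide := true }) [vV_zero, wV_zero, fEps, h10, h20]
    | succ t ih =>
      obtain ⟨i0, i3, iw0, iw1, iw3, i1, i2⟩ := ih
      have A0 : vV U1 U2 F1 F2 x (t + 1) 0 = 1 := by
        rw [vV_succ, Fin.sum_univ_four]
        simp (config := { decide := true }) [fTau, i0]
      have A3 : vV U1 U2 F1 F2 x (t + 1) 3 = 0 := by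
        rw [vV_succ, Fin.sum_univ_four]
        simp (config := { decide := true }) [fTau]
      have W0 : wV U1 U2 F1 F2 r x (t + 1) 0 = 0 := by
        rw [wV_succ, Fin.sum_univ_four, Fin.sum_univ_four]
        simp (config := { decide := true }) [fTau, fEps, iw0]
      have W1 : wV U1 U2 F1 F2 r x (t + 1) 1 = 0 := by
        rw [wV_succ, Fin.sum_univ_four, Fin.sum_univ_four]
        simp (config := { decide := true }) [fTau, fEps, iw0, iw1]
      have W3 : wV U1 U2 F1 F2 r x (t + 1) 3 = r := by
        rw [wV_succ, Fin.sum_univ_four, Fin.sum_univ_four]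
        simp (config := { decide := true }) [fTau, fEps, A0]
      have C1 : vV U1 U2 F1 F2 x (t + 1) 1 = c1 (t + 1) := by
        have hh := h1 (t + 1) (by omega)
        simp only [Nat.add_sub_cancel] at hh
        rw [vV_succ, Fin.sum_univ_four, hh]
        simp (config := { decide := true }) [fTau]
        linear_combination (F1 (x (t + 1))) * i1 + (U1 (x (t + 1))) * i0
      have C2 : vV U1 U2 F1 F2 x (t + 1) 2 + wV U1 U2 F1 F2 r x (t + 1) 2
          = c2 (t + 1) := by
        have hh := h2 (t + 1) (by omega)
        simp only [Nat.add_sub_cancel] at hh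
        rw [vV_succ, wV_succ, Fin.sum_univ_four, Fin.sum_univ_four, Fin.sum_univ_four, hh]
        simp (config := { decide := true }) [fTau, fEps]
        linear_combination (U2 (x (t + 1))) * i1 + (U2 (x (t + 1))) * i3
          + (U2 (x (t + 1))) * iw1 + (U2 (x (t + 1))) * iw3
          + (F2 (x (t + 1))) * i2
      exact ⟨A0, A3, W0, W1, W3, C1, C2⟩
  intro t
  rw [hc, fScore_eq, Fin.sum_univ_four, Fin.sum_univ_four]
  obtain ⟨e0, e3, w0, w1, w3, e1, e2⟩ := key t
  rw [e1, ← e2, w0, w1, w3]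
  simp (config := { decide := true }) [fRho]
  ring
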